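/- Let C be a braided monoidal category and V ∈ C an object with a left dual V*. Define on End(V) := V ⊗ V* the multiplication m = id_V ⊗ ev_V ⊗ id_{V*} : (V ⊗ V*) ⊗ (V ⊗ V*) → V ⊗ V*, the unit η = coev_V : 𝟙 → V ⊗ V*, and for each X ∈ C the morphism t_X = (c_{V,X} ⊗ id_{V*}) ∘ (id_V ⊗ c⁻¹_{X,V*}) : (V ⊗ V*) ⊗ X → X ⊗ (V ⊗ V*). Then (End(V), t, m, η) is a half-braided algebra in C. -/

import Mathlib

open CategoryTheory MonoidalCategory

variable {C : Type*} [Category C] [MonoidalCategory C]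

/-- `(A, mul, one)` is an algebra object in the monoidal category `C`. -/
structure IsMonObj (A : C) (mul : A ⊗ A ⟶ A) (one : 𝟙_ C ⟶ A) : Prop where
  one_mul : (one ▷ A) ≫ mul = (λ_ A).hom
  mul_one : (A ◁ one) ≫ mul = (ρ_ A).hom
  mul_assoc : (mul ▷ A) ≫ mul = (α_ A A A).hom ≫ (A ◁ mul) ≫ mul

/-- The family `t X : V ⊗ X ⟶ X ⊗ V` is a half-braiding for `V`. -/
structure IsHalfBraiding (V : C) (t : ∀ X : C, V ⊗ X ⟶ X ⊗ V) : Prop where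
  isIso : ∀ X : C, IsIso (t X)
  naturality : ∀ {X Y : C} (f : X ⟶ Y), (V ◁ f) ≫ t Y = t X ≫ (f ▷ V)
  tensor : ∀ X Y : C, t (X ⊗ Y) =
    (α_ V X Y).inv ≫ (t X ▷ Y) ≫ (α_ X V Y).hom ≫ (X ◁ t Y) ≫ (α_ X Y V).inv

variable [BraidedCategory C]

/-- `(A, t, mul, one)` is a half-braided algebra in the braided category `C`. -/
structure IsHalfBraidedAlg (A : C) (mul : A ⊗ A ⟶ A) (one : 𝟙_ C ⟶ A)
    (t : ∀ X : C, A ⊗ X ⟶ X ⊗ A) : Prop where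
  mon : IsMonObj A mul one
  hb : IsHalfBraiding A t
  compat₁ : ∀ X : C, (mul ▷ X) ≫ t X =
    (α_ A A X).hom ≫ (A ◁ (β_ X A).inv) ≫ (α_ A X A).inv ≫
      (t X ▷ A) ≫ (α_ X A A).hom ≫ (X ◁ mul)
  compat₂ : ∀ X : C, (mul ▷ X) ≫ t X =
    (α_ A A X).hom ≫ (A ◁ t X) ≫ (α_ A X A).inv ≫
      ((β_ A X).hom ▷ A) ≫ (α_ X A A).hom ≫ (X ◁ mul)

set_option maxHeartbeats 1000000 in
/-- Let `V` be an object of a braided monoidal category `C` admitting a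
dual `V*` (with `ev_V : V* ⊗ V ⟶ 𝟙` and `coev_V : 𝟙 ⟶ V ⊗ V*`; in Mathlib's conventions
this is `Vᘁ`).  Then the internal endomorphism object `End(V) = V ⊗ V*` equipped with the
multiplication `id_V ⊗ ev_V ⊗ id_{V*}`, the unit `coev_V`, and the half-braiding
`t_X = (c_{V,X} ⊗ id_{V*}) ∘ (id_V ⊗ c⁻¹_{X,V*})` is a half-braided algebra in `C`. -/
theorem internalEnd_isHalfBraidedAlg (V : C) [HasRightDual V] :
    IsHalfBraidedAlg (V ⊗ Vᘁ)
      ((α_ V (Vᘁ) (V ⊗ Vᘁ)).hom ≫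
        (V ◁ ((α_ (Vᘁ) V (Vᘁ)).inv ≫ ((ε_ V (Vᘁ)) ▷ (Vᘁ)) ≫ (λ_ (Vᘁ)).hom)))
      (η_ V (Vᘁ))
      (fun X => (α_ V (Vᘁ) X).hom ≫ (V ◁ (β_ X (Vᘁ)).inv) ≫ (α_ V X (Vᘁ)).inv ≫
        ((β_ V X).hom ▷ (Vᘁ)) ≫ (α_ X V (Vᘁ)).hom) := by
  constructor
  · constructor
    · calc _ = (α_ (𝟙_ C) V (Vᘁ)).inv ≫
            (((η_ V (Vᘁ) ▷ V) ≫ (α_ V (Vᘁ) V).hom ≫ (V ◁ ε_ V (Vᘁ))) ▷ (Vᘁ)) ≫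
            ((ρ_ V).hom ▷ (Vᘁ)) := by monoidal
        _ = _ := by rw [ExactPairing.evaluation_coevaluation]; monoidal
    · calc _ = (α_ V (Vᘁ) (𝟙_ C)).hom ≫
            (V ◁ (((Vᘁ) ◁ η_ V (Vᘁ)) ≫ (α_ (Vᘁ) V (Vᘁ)).inv ≫ (ε_ V (Vᘁ) ▷ (Vᘁ)))) ≫
            (V ◁ (λ_ (Vᘁ)).hom) := by monoidal
        _ = _ := by rw [ExactPairing.coevaluation_evaluation]; monoidal
    · calc _ = 𝟙 _ ⊗≫ V ◁ ((ε_ V (Vᘁ) ▷ (((Vᘁ) ⊗ V) ⊗ (Vᘁ))) ≫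
              ((𝟙_ C) ◁ (ε_ V (Vᘁ) ▷ (Vᘁ)))) ⊗≫ 𝟙 _ := by monoidal
        _ = 𝟙 _ ⊗≫ V ◁ ((((Vᘁ) ⊗ V) ◁ (ε_ V (Vᘁ) ▷ (Vᘁ))) ≫
              (ε_ V (Vᘁ) ▷ ((𝟙_ C) ⊗ (Vᘁ)))) ⊗≫ 𝟙 _ := by rw [← whisker_exchange]
        _ = _ := by monoidal
  · constructor
    · intro X; infer_instance
    · intro X Y f
      rw [associator_naturality_right_assoc, ← MonoidalCategory.whiskerLeft_comp_assoc,
        BraidedCategory.braiding_inv_naturality_right, MonoidalCategory.whiskerLeft_comp_assoc,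
        associator_inv_naturality_middle_assoc, ← comp_whiskerRight_assoc,
        BraidedCategory.braiding_naturality_right, comp_whiskerRight_assoc,
        Category.assoc, Category.assoc, associator_naturality_left]
      simp
    · intro X Y
      calc _ = 𝟙 _ ⊗≫ V ◁ ((β_ X (Vᘁ)).inv ▷ Y) ⊗≫
              (((V ⊗ X) ◁ (β_ Y (Vᘁ)).inv) ≫ ((β_ V X).hom ▷ (Y ⊗ Vᘁ))) ⊗≫
              X ◁ ((β_ V Y).hom ▷ (Vᘁ)) ⊗≫ 𝟙 _ := by
            rw [BraidedCategory.braiding_tensor_right_hom, BraidedCategory.braiding_tensor_left_inv]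
            monoidal
        _ = 𝟙 _ ⊗≫ V ◁ ((β_ X (Vᘁ)).inv ▷ Y) ⊗≫
              (((β_ V X).hom ▷ ((Vᘁ) ⊗ Y)) ≫ ((X ⊗ V) ◁ (β_ Y (Vᘁ)).inv)) ⊗≫
              X ◁ ((β_ V Y).hom ▷ (Vᘁ)) ⊗≫ 𝟙 _ := by rw [whisker_exchange]
        _ = _ := by monoidal
  · intro X
    beta_reduce
    symm
    calc _ = 𝟙 _ ⊗≫ (((V ⊗ ((Vᘁ) ⊗ V) : C)) ◁ (β_ X (Vᘁ)).inv) ⊗≫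
            (V ◁ ((β_ X ((Vᘁ) ⊗ V)).inv ▷ (Vᘁ))) ⊗≫
            (((β_ V X).hom ▷ (((Vᘁ) ⊗ V) ⊗ (Vᘁ))) ≫
              ((X ⊗ V) ◁ ((ε_ V (Vᘁ)) ▷ (Vᘁ)))) ⊗≫ 𝟙 _ := by
          simp only [BraidedCategory.braiding_tensor_right_inv]
          monoidal
      _ = 𝟙 _ ⊗≫ (((V ⊗ ((Vᘁ) ⊗ V) : C)) ◁ (β_ X (Vᘁ)).inv) ⊗≫
            (V ◁ (((β_ X ((Vᘁ) ⊗ V)).inv ≫ (X ◁ (ε_ V (Vᘁ)))) ▷ (Vᘁ))) ⊗≫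
            ((β_ V X).hom ▷ ((𝟙_ C) ⊗ (Vᘁ))) ⊗≫ 𝟙 _ := by
          rw [← whisker_exchange]
          monoidal
      _ = 𝟙 _ ⊗≫ (((V ⊗ ((Vᘁ) ⊗ V) : C)) ◁ (β_ X (Vᘁ)).inv) ⊗≫
            (V ◁ ((((ε_ V (Vᘁ)) ▷ X) ≫ (β_ X (𝟙_ C)).inv) ▷ (Vᘁ))) ⊗≫
            ((β_ V X).hom ▷ ((𝟙_ C) ⊗ (Vᘁ))) ⊗≫ 𝟙 _ := by
          rw [BraidedCategory.braiding_inv_naturality_left]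
      _ = 𝟙 _ ⊗≫ ((((V ⊗ ((Vᘁ) ⊗ V) : C)) ◁ (β_ X (Vᘁ)).inv) ≫
            ((V ◁ (ε_ V (Vᘁ))) ▷ (X ⊗ (Vᘁ)))) ⊗≫
            ((β_ V X).hom ▷ (Vᘁ)) ⊗≫ 𝟙 _ := by
          rw [braiding_inv_tensorUnit_right]
          monoidal
      _ = _ := by
          rw [whisker_exchange]
          monoidal
  · intro X
    beta_reduce
    symm
    calc _ = 𝟙 _ ⊗≫ (((V ⊗ ((Vᘁ) ⊗ V) : C)) ◁ (β_ X (Vᘁ)).inv) ⊗≫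
            (V ◁ ((β_ ((Vᘁ) ⊗ V) X).hom ▷ (Vᘁ))) ⊗≫
            (((β_ V X).hom ▷ (((Vᘁ) ⊗ V) ⊗ (Vᘁ))) ≫
              ((X ⊗ V) ◁ ((ε_ V (Vᘁ)) ▷ (Vᘁ)))) ⊗≫ 𝟙 _ := by
          simp only [BraidedCategory.braiding_tensor_left_hom]
          monoidal
      _ = 𝟙 _ ⊗≫ (((V ⊗ ((Vᘁ) ⊗ V) : C)) ◁ (β_ X (Vᘁ)).inv) ⊗≫
            (V ◁ (((β_ ((Vᘁ) ⊗ V) X).hom ≫ (X ◁ (ε_ V (Vᘁ)))) ▷ (Vᘁ))) ⊗≫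
            ((β_ V X).hom ▷ ((𝟙_ C) ⊗ (Vᘁ))) ⊗≫ 𝟙 _ := by
          rw [← whisker_exchange]
          monoidal
      _ = 𝟙 _ ⊗≫ (((V ⊗ ((Vᘁ) ⊗ V) : C)) ◁ (β_ X (Vᘁ)).inv) ⊗≫
            (V ◁ ((((ε_ V (Vᘁ)) ▷ X) ≫ (β_ (𝟙_ C) X).hom) ▷ (Vᘁ))) ⊗≫
            ((β_ V X).hom ▷ ((𝟙_ C) ⊗ (Vᘁ))) ⊗≫ 𝟙 _ := by
          rw [BraidedCategory.braiding_naturality_left]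
      _ = 𝟙 _ ⊗≫ ((((V ⊗ ((Vᘁ) ⊗ V) : C)) ◁ (β_ X (Vᘁ)).inv) ≫
            ((V ◁ (ε_ V (Vᘁ))) ▷ (X ⊗ (Vᘁ)))) ⊗≫
            ((β_ V X).hom ▷ (Vᘁ)) ⊗≫ 𝟙 _ := by
          rw [braiding_tensorUnit_left]
          monoidal
      _ = _ := by
          rw [whisker_exchange]
          monoidal
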